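/- arXiv:0801.4922 — 6 statements merged into one kernel-verified Lean document; each statement's English description precedes it below -/
import Mathlib

section
/- Let a, b, c, d be four pairwise distinct complex numbers, and let e, f, g, h be complex numbers with e ∉ {b, c}, f ∉ {b, d}, g ∉ {a, d}, h ∉ {a, c}. Define the pre-exchange cross-ratio weights x₁ = −((b−c)(a−d))/((b−d)(a−c)), x₂ = −((b−e)(c−a))/((b−a)(c−e)), x₃ = −((d−f)(b−a))/((d−a)(b−f)), x₄ = −((d−b)(a−g))/((d−g)(a−b)), x₅ = −((c−h)(a−b))/((c−b)(a−h)), and the post-exchange cross-ratio weights x₁′ = −((d−b)(c−a))/((d−a)(c−b)), x₂′ = −((b−e)(c−d))/((b−d)(c−e)), x₃′ = −((d−f)(b−c))/((d−c)(b−f)), x₄′ = −((d−c)(a−g))/((d−g)(a−c)), x₅′ = −((c−h)(a−d))/((c−d)(a−h)). Then x₁′ = x₁⁻¹, x₁′ ≠ −1, x₂′ = (1+x₁)·x₂, x₃′ = (1+x₁⁻¹)⁻¹·x₃, x₄′ = (1+x₁)·x₄, and x₅′ = (1+x₁⁻¹)⁻¹·x₅. -/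
/-- Transformation of all five cross-ratio edge weights under an embedded
diagonal exchange: the square with vertices `a = v₋`, `b = v₊`, `c = v_left`,
`d = v_right` has its diagonal `ab` replaced by `cd`; the sides `cb`, `bd`,
`ad`, `ac` carry outer triangles with third vertices `e`, `f`, `g`, `h`. -/
theorem diag_exchange_cross_ratio_weights
    (a b c d e f g h : ℂ)
    (hab : a ≠ b) (hac : a ≠ c) (had : a ≠ d)
    (hbc : b ≠ c) (hbd : b ≠ d) (hcd : c ≠ d)
    (heb : e ≠ b) (hec : e ≠ c)
    (hfb : f ≠ b) (hfd : f ≠ d)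
    (hga : g ≠ a) (hgd : g ≠ d)
    (hha : h ≠ a) (hhc : h ≠ c) :
    let x₁ : ℂ := -((b - c) * (a - d)) / ((b - d) * (a - c))
    let x₂ : ℂ := -((b - e) * (c - a)) / ((b - a) * (c - e))
    let x₃ : ℂ := -((d - f) * (b - a)) / ((d - a) * (b - f))
    let x₄ : ℂ := -((d - b) * (a - g)) / ((d - g) * (a - b))
    let x₅ : ℂ := -((c - h) * (a - b)) / ((c - b) * (a - h))
    let x₁' : ℂ := -((d - b) * (c - a)) / ((d - a) * (c - b))
    let x₂' : ℂ := -((b - e) * (c - d)) / ((b - d) * (c - e))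
    let x₃' : ℂ := -((d - f) * (b - c)) / ((d - c) * (b - f))
    let x₄' : ℂ := -((d - c) * (a - g)) / ((d - g) * (a - c))
    let x₅' : ℂ := -((c - h) * (a - d)) / ((c - d) * (a - h))
    x₁' = x₁⁻¹ ∧ x₁' ≠ -1 ∧
    x₂' = (1 + x₁) * x₂ ∧ x₃' = (1 + x₁⁻¹)⁻¹ * x₃ ∧
    x₄' = (1 + x₁) * x₄ ∧ x₅' = (1 + x₁⁻¹)⁻¹ * x₅ := by
  have hab' : a - b ≠ 0 := sub_ne_zero.mpr hab
  have hac' : a - c ≠ 0 := sub_ne_zero.mpr hac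
  have had' : a - d ≠ 0 := sub_ne_zero.mpr had
  have hbc' : b - c ≠ 0 := sub_ne_zero.mpr hbc
  have hbd' : b - d ≠ 0 := sub_ne_zero.mpr hbd
  have hcd' : c - d ≠ 0 := sub_ne_zero.mpr hcd
  have hba' : b - a ≠ 0 := sub_ne_zero.mpr hab.symm
  have hca' : c - a ≠ 0 := sub_ne_zero.mpr hac.symm
  have hda' : d - a ≠ 0 := sub_ne_zero.mpr had.symm
  have hcb' : c - b ≠ 0 := sub_ne_zero.mpr hbc.symm
  have hdb' : d - b ≠ 0 := sub_ne_zero.mpr hbd.symm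
  have hdc' : d - c ≠ 0 := sub_ne_zero.mpr hcd.symm
  have hbe' : b - e ≠ 0 := sub_ne_zero.mpr (Ne.symm heb)
  have hce' : c - e ≠ 0 := sub_ne_zero.mpr (Ne.symm hec)
  have hdf' : d - f ≠ 0 := sub_ne_zero.mpr (Ne.symm hfd)
  have hbf' : b - f ≠ 0 := sub_ne_zero.mpr (Ne.symm hfb)
  have hdg' : d - g ≠ 0 := sub_ne_zero.mpr (Ne.symm hgd)
  have hag' : a - g ≠ 0 := sub_ne_zero.mpr (Ne.symm hga)
  have hch' : c - h ≠ 0 := sub_ne_zero.mpr (Ne.symm hhc)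
  have hah' : a - h ≠ 0 := sub_ne_zero.mpr (Ne.symm hha)
  intro x₁ x₂ x₃ x₄ x₅ x₁' x₂' x₃' x₄' x₅'
  have hinv : x₁⁻¹ = -((d - b) * (c - a)) / ((d - a) * (c - b)) := by
    simp only [x₁]
    field_simp
    ring
  have hone : (1 : ℂ) + x₁ = (a - b) * (c - d) / ((b - d) * (a - c)) := by
    simp only [x₁]
    field_simp
    ring
  have honeinv : (1 : ℂ) + x₁⁻¹ = (a - b) * (d - c) / ((d - a) * (c - b)) := by
    rw [hinv]; field_simp; ring
  refine ⟨by rw [hinv], ?_, ?_, ?_, ?_, ?_⟩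
  · simp only [x₁']
    intro hne
    rw [div_eq_iff (mul_ne_zero hda' hcb')] at hne
    apply mul_ne_zero hab' hdc'
    linear_combination hne
  · simp only [x₂', x₂, hone]; field_simp; ring
  · simp only [x₃', x₃, honeinv]
    rw [inv_div]
    field_simp
    ring
  · simp only [x₄', x₄, hone]; field_simp; ring
  · simp only [x₅', x₅, honeinv]
    rw [inv_div]
    field_simp
    ring
end

section
/- Let a, b, c, d be four pairwise distinct complex numbers, and let e ∈ ℂ with e ≠ b and e ≠ c. Set x₁ = −((b−c)(a−d))/((b−d)(a−c)), x₂ = −((b−e)(c−a))/((b−a)(c−e)), and x₂′ = −((b−e)(c−d))/((b−d)(c−e)). Then x₂′ = (1+x₁)·x₂. -/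
/-- Transformation of the weight of the side from `c` to `b` (outer vertex `e`)
under a diagonal exchange. -/
theorem diag_exchange_side_cb
    (a b c d e : ℂ)
    (hab : a ≠ b) (hac : a ≠ c) (had : a ≠ d)
    (hbc : b ≠ c) (hbd : b ≠ d) (hcd : c ≠ d)
    (heb : e ≠ b) (hec : e ≠ c) :
    -((b - e) * (c - d)) / ((b - d) * (c - e)) =
      (1 + -((b - c) * (a - d)) / ((b - d) * (a - c))) *
        (-((b - e) * (c - a)) / ((b - a) * (c - e))) := by
  have h1 : b - d ≠ 0 := sub_ne_zero.mpr hbd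
  have h2 : c - e ≠ 0 := sub_ne_zero.mpr (fun h => hec h.symm)
  have h3 : a - c ≠ 0 := sub_ne_zero.mpr hac
  have h4 : b - a ≠ 0 := sub_ne_zero.mpr (fun h => hab h.symm)
  field_simp
  ring
end

section
/- Let a, b, c, d be four pairwise distinct complex numbers, and let f ∈ ℂ with f ≠ b and f ≠ d. Set x₁ = −((b−c)(a−d))/((b−d)(a−c)), x₃ = −((d−f)(b−a))/((d−a)(b−f)), and x₃′ = −((d−f)(b−c))/((d−c)(b−f)). Then x₃′ = (1+x₁⁻¹)⁻¹·x₃. -/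
/-- Transformation of the weight of the side from `b` to `d` (outer vertex `f`)
under a diagonal exchange. -/
theorem diag_exchange_side_bd
    (a b c d f : ℂ)
    (hab : a ≠ b) (hac : a ≠ c) (had : a ≠ d)
    (hbc : b ≠ c) (hbd : b ≠ d) (hcd : c ≠ d)
    (hfb : f ≠ b) (hfd : f ≠ d) :
    -((d - f) * (b - c)) / ((d - c) * (b - f)) =
      (1 + (-((b - c) * (a - d)) / ((b - d) * (a - c)))⁻¹)⁻¹ *
        (-((d - f) * (b - a)) / ((d - a) * (b - f))) := by
  have h1 : b - c ≠ 0 := sub_ne_zero.mpr hbc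
  have h2 : a - d ≠ 0 := sub_ne_zero.mpr had
  have h3 : b - d ≠ 0 := sub_ne_zero.mpr hbd
  have h4 : a - c ≠ 0 := sub_ne_zero.mpr hac
  have h5 : d - c ≠ 0 := sub_ne_zero.mpr (Ne.symm hcd)
  have h6 : b - f ≠ 0 := sub_ne_zero.mpr (Ne.symm hfb)
  have h7 : d - a ≠ 0 := sub_ne_zero.mpr (Ne.symm had)
  have h8 : a - b ≠ 0 := sub_ne_zero.mpr hab
  have key : 1 + (-((b - c) * (a - d)) / ((b - d) * (a - c)))⁻¹
      = (a - b) * (d - c) / ((b - c) * (a - d)) := by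
    field_simp
    ring
  rw [key]
  have h9 : (a - b) * (d - c) ≠ 0 := mul_ne_zero h8 h5
  field_simp
  ring
end

section
/- Let a, b, c, d be four pairwise distinct complex numbers, and let g ∈ ℂ with g ≠ a and g ≠ d. Set x₁ = −((b−c)(a−d))/((b−d)(a−c)), x₄ = −((d−b)(a−g))/((d−g)(a−b)), and x₄′ = −((d−c)(a−g))/((d−g)(a−c)). Then x₄′ = (1+x₁)·x₄. -/
/-- Transformation of the weight of the side from `a` to `d` (outer vertex `g`)
under a diagonal exchange. -/
theorem diag_exchange_side_ad
    (a b c d g : ℂ)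
    (hab : a ≠ b) (hac : a ≠ c) (had : a ≠ d)
    (hbc : b ≠ c) (hbd : b ≠ d) (hcd : c ≠ d)
    (hga : g ≠ a) (hgd : g ≠ d) :
    -((d - c) * (a - g)) / ((d - g) * (a - c)) =
      (1 + -((b - c) * (a - d)) / ((b - d) * (a - c))) *
        (-((d - b) * (a - g)) / ((d - g) * (a - b))) := by
  have h1 : a - b ≠ 0 := sub_ne_zero.mpr hab
  have h2 : a - c ≠ 0 := sub_ne_zero.mpr hac
  have h3 : b - d ≠ 0 := sub_ne_zero.mpr hbd
  have h4 : d - g ≠ 0 := sub_ne_zero.mpr (fun h => hgd (by linear_combination -h))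
  field_simp
  ring
end

section
/- Let A be an associative algebra over ℂ, let q be a nonzero complex number, let k be a natural number, let x : Fin k → A, and let σ : Fin k → Fin k → ℤ satisfy σ v u = −(σ u v) for all u, v and x u * x v = q^(2·σ u v) • (x v * x u) for all u, v. Then for every permutation τ of Fin k, q^(−Σ_{u<v} σ (τ u) (τ v)) • (x (τ 1) * x (τ 2) * ⋯ * x (τ k)) = q^(−Σ_{u<v} σ u v) • (x 1 * x 2 * ⋯ * x k), where the products are taken in increasing order of the index. -/
open Finset

private def Esum {ι : Type*} (σ : ι → ι → ℤ) : List ι → ℤ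
  | [] => 0
  | a :: l => (l.map (σ a)).sum + Esum σ l

private lemma weyl_key {A : Type*} [Ring A] [Algebra ℂ A] {ι : Type*}
    (q : ℂ) (hq : q ≠ 0) (x : ι → A) (σ : ι → ι → ℤ)
    (hanti : ∀ u v, σ v u = -(σ u v))
    (hcomm : ∀ u v, x u * x v = q ^ (2 * σ u v) • (x v * x u))
    {l l' : List ι} (h : l.Perm l') :
    q ^ (-(Esum σ l)) • (l.map x).prod = q ^ (-(Esum σ l')) • (l'.map x).prod := by
  induction h with
  | nil => rfl
  | cons a h ih =>
      have hsum := (h.map (σ a)).sum_eq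
      simp only [Esum, List.map_cons, List.prod_cons, neg_add, zpow_add₀ hq, mul_smul]
      rw [hsum]
      congr 1
      rw [← mul_smul_comm, ih, mul_smul_comm]
  | swap a b l =>
      simp only [Esum, List.map_cons, List.prod_cons, List.sum_cons]
      rw [← mul_assoc (x b) (x a), hcomm b a, smul_mul_assoc, mul_assoc, smul_smul,
        ← zpow_add₀ hq]
      congr 1
      rw [hanti a b]; ring
  | trans _ _ ih1 ih2 => exact ih1.trans ih2

private lemma pair_sum {k : ℕ} (g : Fin k → Fin k → ℤ) :
    ∑ p ∈ univ.filter (fun p : Fin k × Fin k => p.1 < p.2), g p.1 p.2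
      = ∑ u : Fin k, ∑ v ∈ Ioi u, g u v := by
  rw [Finset.sum_filter, Fintype.sum_prod_type]
  refine Finset.sum_congr rfl fun u _ => ?_
  rw [← Finset.sum_filter]
  congr 1
  ext v; simp

private lemma esum_ofFn {ι : Type*} (σ : ι → ι → ℤ) :
    ∀ (k : ℕ) (f : Fin k → ι),
      Esum σ (List.ofFn f) = ∑ u : Fin k, ∑ v ∈ Ioi u, σ (f u) (f v)
  | 0, f => by simp [Esum]
  | (k+1), f => by
      rw [List.ofFn_succ]
      show ((List.ofFn fun i => f i.succ).map (σ (f 0))).sum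
          + Esum σ (List.ofFn fun i => f i.succ) = _
      rw [List.map_ofFn, List.sum_ofFn, esum_ofFn σ k, Fin.sum_univ_succ]
      congr 1
      · rw [Fin.sum_Ioi_zero]
        rfl
      · refine Finset.sum_congr rfl fun i _ => ?_
        rw [Fin.sum_Ioi_succ]

open Finset in
/-- The Weyl quantum ordering `q^(-Σ_{u<v} σ_{i_u i_v}) X_{i₁} ⋯ X_{i_k}` of a
product of `q`-commuting elements is independent of the ordering of the
factors. -/
theorem weyl_quantum_ordering_perm_invariant
    (A : Type*) [Ring A] [Algebra ℂ A]
    (q : ℂ) (hq : q ≠ 0) (k : ℕ)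
    (x : Fin k → A) (σ : Fin k → Fin k → ℤ)
    (hanti : ∀ u v, σ v u = -(σ u v))
    (hcomm : ∀ u v, x u * x v = q ^ (2 * σ u v) • (x v * x u))
    (τ : Equiv.Perm (Fin k)) :
    q ^ (-(∑ p ∈ univ.filter (fun p : Fin k × Fin k => p.1 < p.2),
          σ (τ p.1) (τ p.2))) • (List.ofFn fun u => x (τ u)).prod =
      q ^ (-(∑ p ∈ univ.filter (fun p : Fin k × Fin k => p.1 < p.2),
          σ p.1 p.2)) • (List.ofFn x).prod := by
  have hperm : (List.ofFn (⇑τ)).Perm (List.ofFn (id : Fin k → Fin k)) :=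
    τ.ofFn_comp_perm (id : Fin k → Fin k)
  have key := weyl_key q hq x σ hanti hcomm hperm
  rw [List.map_ofFn, List.map_ofFn, esum_ofFn, esum_ofFn] at key
  simp only [id_eq] at key
  rw [← pair_sum (fun u v => σ (τ u) (τ v)), ← pair_sum σ] at key
  simpa [Function.comp_def] using key
end

section
/- Let A be an associative algebra over ℂ, let N ≥ 1 be a natural number, let q be a nonzero complex number with q^N = (−1)^(N+1), let k be a natural number, let x : Fin k → A, and let σ : Fin k → Fin k → ℤ satisfy σ v u = −(σ u v) for all u, v and x u * x v = q^(2·σ u v) • (x v * x u) for all u, v. Set P = q^(−Σ_{u<v} σ u v) • (x 1 * x 2 * ⋯ * x k) (product in increasing index order). Then P^N = x 1^N * x 2^N * ⋯ * x k^N. -/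
section
open Finset

lemma sum_filter_succ (k : ℕ) (σ : Fin (k+1) → Fin (k+1) → ℤ) :
    ∑ p ∈ univ.filter (fun p : Fin (k+1) × Fin (k+1) => p.1 < p.2), σ p.1 p.2
      = (∑ v : Fin k, σ 0 v.succ)
        + ∑ p ∈ univ.filter (fun p : Fin k × Fin k => p.1 < p.2), σ p.1.succ p.2.succ := by
  rw [Finset.sum_filter, Finset.sum_filter, Fintype.sum_prod_type, Fintype.sum_prod_type]
  rw [Fin.sum_univ_succ]
  simp [Fin.sum_univ_succ, Fin.succ_lt_succ_iff, Fin.succ_pos]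

lemma pow_comm_lemma {A : Type*} [Ring A] [Algebra ℂ A] (q : ℂ) (hq : q ≠ 0)
    (a b : A) (s : ℤ) (h : a * b = q ^ (2*s) • (b * a)) :
    ∀ n : ℕ, a ^ n * b = q ^ (2 * (n * s)) • (b * a ^ n) := by
  intro n
  induction n with
  | zero => simp
  | succ n ih =>
    have : a ^ (n+1) * b = a ^ n * (a * b) := by rw [pow_succ, mul_assoc]
    rw [this, h, mul_smul_comm, ← mul_assoc, ih, smul_mul_assoc, smul_smul,
      ← zpow_add₀ hq, mul_assoc, ← pow_succ]
    congr 1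
    push_cast
    ring

lemma move_lemma {A : Type*} [Ring A] [Algebra ℂ A] (q : ℂ) (hq : q ≠ 0) :
    ∀ (k : ℕ) (y : Fin k → A) (a : A) (τ : Fin k → ℤ),
    (∀ v, y v * a = q ^ (2 * τ v) • (a * y v)) →
    (List.ofFn y).prod * a = q ^ (2 * ∑ v, τ v) • (a * (List.ofFn y).prod) := by
  intro k
  induction k with
  | zero => intro y a τ _; simp
  | succ k ih =>
    intro y a τ h
    rw [List.ofFn_succ, List.prod_cons, mul_assoc, ih _ a (fun v => τ v.succ) (fun v => h v.succ),
      mul_smul_comm, ← mul_assoc, h 0, smul_mul_assoc, smul_smul, ← zpow_add₀ hq,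
      Fin.sum_univ_succ, mul_assoc]
    congr 1
    ring

lemma step_lemma {A : Type*} [Ring A] [Algebra ℂ A] (q : ℂ) (hq : q ≠ 0) :
    ∀ (k : ℕ) (x : Fin k → A) (σ : Fin k → Fin k → ℤ),
    (∀ u v, σ v u = -(σ u v)) →
    (∀ u v, x u * x v = q ^ (2 * σ u v) • (x v * x u)) →
    ∀ n : ℕ,
    (List.ofFn fun u => x u ^ n).prod * (List.ofFn x).prod
      = q ^ (-(2 * (n : ℤ) * ∑ p ∈ univ.filter (fun p : Fin k × Fin k => p.1 < p.2), σ p.1 p.2))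
          • (List.ofFn fun u => x u ^ (n+1)).prod := by
  intro k
  induction k with
  | zero => intro x σ _ _ n; simp
  | succ k ih =>
    intro x σ hanti hcomm n
    have key : (List.ofFn fun v : Fin k => x v.succ ^ n).prod * x 0
        = q ^ (2 * ∑ v : Fin k, (n : ℤ) * σ v.succ 0)
            • (x 0 * (List.ofFn fun v : Fin k => x v.succ ^ n).prod) :=
      move_lemma q hq k _ (x 0) (fun v => (n : ℤ) * σ v.succ 0)
        (fun v => pow_comm_lemma q hq _ _ _ (hcomm v.succ 0) n)
    have ihk := ih (fun v => x v.succ) (fun u v => σ u.succ v.succ)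
      (fun u v => hanti u.succ v.succ) (fun u v => hcomm u.succ v.succ) n
    rw [List.ofFn_succ, List.ofFn_succ (f := x), List.ofFn_succ (f := fun u => x u ^ (n+1)),
      List.prod_cons, List.prod_cons, List.prod_cons]
    calc x 0 ^ n * (List.ofFn fun v : Fin k => x v.succ ^ n).prod *
          (x 0 * (List.ofFn fun v : Fin k => x v.succ).prod)
        = x 0 ^ n * (((List.ofFn fun v : Fin k => x v.succ ^ n).prod * x 0) *
            (List.ofFn fun v : Fin k => x v.succ).prod) := by
          simp [mul_assoc]
      _ = q ^ (2 * ∑ v : Fin k, (n : ℤ) * σ v.succ 0) •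
            (x 0 ^ (n+1) * ((List.ofFn fun v : Fin k => x v.succ ^ n).prod *
              (List.ofFn fun v : Fin k => x v.succ).prod)) := by
          rw [key, smul_mul_assoc, mul_smul_comm]
          congr 1
          rw [mul_assoc (x 0), ← mul_assoc (x 0 ^ n), ← pow_succ]
      _ = q ^ (2 * ∑ v : Fin k, (n : ℤ) * σ v.succ 0) •
            (q ^ (-(2 * (n : ℤ) * ∑ p ∈ univ.filter (fun p : Fin k × Fin k => p.1 < p.2),
                σ p.1.succ p.2.succ)) •
              (x 0 ^ (n+1) * (List.ofFn fun v : Fin k => x v.succ ^ (n+1)).prod)) := by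
          rw [ihk, mul_smul_comm]
      _ = _ := by
          rw [smul_smul, ← zpow_add₀ hq]
          congr 2
          rw [sum_filter_succ k σ]
          have : ∀ v : Fin k, σ v.succ 0 = -(σ 0 v.succ) := fun v => hanti 0 v.succ
          simp only [this, mul_neg, Finset.sum_neg_distrib, ← Finset.mul_sum]
          push_cast
          ring

lemma prod_pow_lemma {A : Type*} [Ring A] [Algebra ℂ A] (q : ℂ) (hq : q ≠ 0)
    (k : ℕ) (x : Fin k → A) (σ : Fin k → Fin k → ℤ)
    (hanti : ∀ u v, σ v u = -(σ u v))
    (hcomm : ∀ u v, x u * x v = q ^ (2 * σ u v) • (x v * x u)) :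
    ∀ n : ℕ, ((List.ofFn x).prod) ^ n
      = q ^ (-((n : ℤ) * ((n : ℤ) - 1) * ∑ p ∈ univ.filter (fun p : Fin k × Fin k => p.1 < p.2), σ p.1 p.2))
          • (List.ofFn fun u => x u ^ n).prod := by
  intro n
  induction n with
  | zero => simp
  | succ n ih =>
    rw [pow_succ, ih, smul_mul_assoc, step_lemma q hq k x σ hanti hcomm n, smul_smul,
      ← zpow_add₀ hq]
    congr 2
    push_cast
    ring


end


open Finset in
/-- If `q ^ N = (-1) ^ (N + 1)`, the Weyl quantum ordering
`P = q^(-Σ_{u<v} σ_{u v}) x₁ ⋯ x_k` of a product of `q`-commuting elements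
satisfies `P ^ N = x₁ ^ N ⋯ x_k ^ N`. -/
theorem weyl_quantum_ordering_pow
    (A : Type*) [Ring A] [Algebra ℂ A]
    (N : ℕ) (hN : 1 ≤ N)
    (q : ℂ) (hq : q ≠ 0) (hqN : q ^ N = (-1 : ℂ) ^ (N + 1)) (k : ℕ)
    (x : Fin k → A) (σ : Fin k → Fin k → ℤ)
    (hanti : ∀ u v, σ v u = -(σ u v))
    (hcomm : ∀ u v, x u * x v = q ^ (2 * σ u v) • (x v * x u)) :
    (q ^ (-(∑ p ∈ univ.filter (fun p : Fin k × Fin k => p.1 < p.2),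
          σ p.1 p.2)) • (List.ofFn x).prod) ^ N =
      (List.ofFn fun u => x u ^ N).prod := by
  set S : ℤ := ∑ p ∈ univ.filter (fun p : Fin k × Fin k => p.1 < p.2), σ p.1 p.2 with hS
  rw [smul_pow, prod_pow_lemma q hq k x σ hanti hcomm N, smul_smul]
  have h1 : (q ^ (-S)) ^ N = q ^ ((-S) * N) := by
    rw [← zpow_natCast (q ^ (-S)), ← zpow_mul]
  rw [h1, ← zpow_add₀ hq]
  have h2 : (-S) * N + -((N : ℤ) * ((N : ℤ) - 1) * S) = (N : ℤ) * (-((N : ℤ) * S)) := by ring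
  rw [h2, zpow_mul, zpow_natCast, hqN]
  have h3 : ((-1 : ℂ) ^ (N + 1)) ^ (-((N : ℤ) * S)) = 1 := by
    rw [← zpow_natCast (-1 : ℂ) (N + 1), ← zpow_mul]
    apply Even.neg_one_zpow
    have : Even ((N : ℤ) * (N + 1)) := Int.even_mul_succ_self N
    have h4 : ((N : ℤ) + 1) * -((N : ℤ) * S) = ((N : ℤ) * ((N : ℤ) + 1)) * (-S) := by ring
    push_cast
    rw [h4]
    exact this.mul_right _
  rw [h3, one_smul]
end
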